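/- For every real number q ≥ 2, the gamma function satisfies Γ((q+1)/2) ≤ (q/4)^{q/2} · √π. -/

import Mathlib

open Real

/-- tangent line bound for `u * log u` at `a`. -/
private lemma tangent_log {a u : ℝ} (ha : 0 < a) (hu : 0 < u) :
    u * Real.log a + u - a ≤ u * Real.log u := by
  have h : 1 - (u / a)⁻¹ ≤ Real.log (u / a) := Real.one_sub_inv_le_log_of_pos (by positivity)
  rw [Real.log_div hu.ne' ha.ne'] at h
  have h2 : (u / a)⁻¹ = a / u := by field_simp
  rw [h2] at h
  have := mul_le_mul_of_nonneg_left h hu.le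
  have hau : u * (a / u) = a := by field_simp
  nlinarith

/-- numeric fact: `3 * log 2 - log π ≤ 1`, i.e. `8 ≤ e * π`. -/
private lemma num1 : 3 * Real.log 2 - Real.log π ≤ 1 := by
  have h8 : (8 : ℝ) / π ≤ Real.exp 1 := by
    rw [div_le_iff₀ Real.pi_pos]
    nlinarith [mul_lt_mul'' Real.exp_one_gt_d9 Real.pi_gt_three (by norm_num) (by norm_num)]
  have := (Real.log_le_iff_le_exp (by positivity : (0:ℝ) < 8 / π)).2 h8
  rw [Real.log_div (by norm_num) Real.pi_ne_zero] at this
  have h3 : Real.log 8 = 3 * Real.log 2 := by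
    rw [show (8:ℝ) = 2 ^ (3:ℕ) by norm_num, Real.log_pow]; push_cast; ring
  linarith [h3 ▸ this]

/-- numeric fact: `log 3 + log π - 2 * log 2 ≤ 1`, i.e. `3π ≤ 4e`. -/
private lemma num2 : Real.log 3 + Real.log π - 2 * Real.log 2 ≤ 1 := by
  have h8 : (3 : ℝ) * π / 4 ≤ Real.exp 1 := by
    linarith [Real.exp_one_gt_d9, Real.pi_lt_d2]
  have := (Real.log_le_iff_le_exp (by positivity : (0:ℝ) < 3 * π / 4)).2 h8
  rw [Real.log_div (by positivity) (by norm_num), Real.log_mul (by norm_num) Real.pi_ne_zero] at this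
  have h4 : Real.log 4 = 2 * Real.log 2 := by
    rw [show (4:ℝ) = 2 ^ (2:ℕ) by norm_num, Real.log_pow]; push_cast; ring
  linarith [h4 ▸ this]

/-- numeric fact: `0 ≤ 3 * log 3 - 6 * log 2 + log π`, i.e. `64 ≤ 27 π`. -/
private lemma num3 : 0 ≤ 3 * Real.log 3 - 6 * Real.log 2 + Real.log π := by
  have h : Real.log 64 ≤ Real.log (27 * π) := by
    apply Real.log_le_log (by norm_num)
    nlinarith [Real.pi_gt_three]
  rw [Real.log_mul (by norm_num) Real.pi_ne_zero] at h
  have h27 : Real.log 27 = 3 * Real.log 3 := by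
    rw [show (27:ℝ) = 3 ^ (3:ℕ) by norm_num, Real.log_pow]; push_cast; ring
  have h64 : Real.log 64 = 6 * Real.log 2 := by
    rw [show (64:ℝ) = 2 ^ (6:ℕ) by norm_num, Real.log_pow]; push_cast; ring
  linarith [h27 ▸ h64 ▸ h]

/-- The target bound in logarithmic form. -/
private noncomputable def L (x : ℝ) : ℝ :=
  (x - 1/2) * Real.log ((x - 1/2) / 2) + Real.log (Real.sqrt π)

private lemma gamma_three_halves : Real.Gamma (3/2) = Real.sqrt π / 2 := by
  have : Real.Gamma (1/2 + 1) = (1/2) * Real.Gamma (1/2) := Real.Gamma_add_one (by norm_num)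
  rw [Real.Gamma_one_half_eq] at this
  rw [show (3:ℝ)/2 = 1/2 + 1 by norm_num, this]; ring

private lemma gamma_five_halves : Real.Gamma (5/2) = 3 * Real.sqrt π / 4 := by
  have : Real.Gamma (3/2 + 1) = (3/2) * Real.Gamma (3/2) := Real.Gamma_add_one (by norm_num)
  rw [gamma_three_halves] at this
  rw [show (5:ℝ)/2 = 3/2 + 1 by norm_num, this]; ring

private lemma log_sqrt_pi : Real.log (Real.sqrt π) = Real.log π / 2 :=
  Real.log_sqrt Real.pi_pos.le

/-- base case on `[3/2, 2]`. -/
private lemma baseA {x : ℝ} (h1 : 3/2 ≤ x) (h2 : x ≤ 2) :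
    Real.log (Real.Gamma x) ≤ L x := by
  obtain ⟨u, hu⟩ : ∃ u : ℝ, u = x - 1/2 := ⟨_, rfl⟩
  have hu1 : 1 ≤ u := by rw [hu]; linarith
  have hu2 : u ≤ 3/2 := by rw [hu]; linarith
  have hup : 0 < u := by linarith
  have hconv := Real.convexOn_log_Gamma.2 (Set.mem_Ioi.2 (by norm_num : (0:ℝ) < 3/2))
    (Set.mem_Ioi.2 (by norm_num : (0:ℝ) < 2)) (by linarith : (0:ℝ) ≤ 2 * (2 - x))
    (by linarith : (0:ℝ) ≤ 2 * x - 3) (by ring)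
  have hx : (2 * (2 - x)) • (3/2 : ℝ) + (2 * x - 3) • (2:ℝ) = x := by
    simp only [smul_eq_mul]; ring
  rw [hx] at hconv
  simp only [Function.comp, smul_eq_mul] at hconv
  rw [Real.Gamma_two, Real.log_one, gamma_three_halves] at hconv
  have hlog32 : Real.log (Real.sqrt π / 2) = Real.log π / 2 - Real.log 2 := by
    rw [Real.log_div (Real.sqrt_ne_zero'.2 Real.pi_pos) (by norm_num), log_sqrt_pi]
  rw [hlog32] at hconv
  have hlogu2 : Real.log (u / 2) = Real.log u - Real.log 2 :=
    Real.log_div hup.ne' (by norm_num)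
  have htan : u * Real.log 1 + u - 1 ≤ u * Real.log u := tangent_log one_pos hup
  rw [Real.log_one] at htan
  have hnum := num1
  simp only [L]
  rw [hu.symm, hlogu2, log_sqrt_pi]
  have key : 0 ≤ u * Real.log u + (u - 1) * (Real.log π - 3 * Real.log 2) := by
    nlinarith
  have hx' : 2 * (2 - x) = 3 - 2 * u := by rw [hu]; ring
  rw [hx'] at hconv
  nlinarith [hconv]

/-- base case on `[2, 5/2]`. -/
private lemma baseB {x : ℝ} (h1 : 2 ≤ x) (h2 : x ≤ 5/2) :
    Real.log (Real.Gamma x) ≤ L x := by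
  obtain ⟨u, hu⟩ : ∃ u : ℝ, u = x - 1/2 := ⟨_, rfl⟩
  have hu1 : 3/2 ≤ u := by rw [hu]; linarith
  have hu2 : u ≤ 2 := by rw [hu]; linarith
  have hup : 0 < u := by linarith
  have hconv := Real.convexOn_log_Gamma.2 (Set.mem_Ioi.2 (by norm_num : (0:ℝ) < 2))
    (Set.mem_Ioi.2 (by norm_num : (0:ℝ) < 5/2)) (by linarith : (0:ℝ) ≤ 5 - 2 * x)
    (by linarith : (0:ℝ) ≤ 2 * x - 4) (by ring)
  have hx : (5 - 2 * x) • (2 : ℝ) + (2 * x - 4) • (5/2:ℝ) = x := by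
    simp only [smul_eq_mul]; ring
  rw [hx] at hconv
  simp only [Function.comp, smul_eq_mul] at hconv
  rw [Real.Gamma_two, Real.log_one, gamma_five_halves] at hconv
  have hd : Real.log (3 * Real.sqrt π / 4) =
      Real.log 3 + Real.log π / 2 - 2 * Real.log 2 := by
    rw [Real.log_div (by positivity) (by norm_num),
      Real.log_mul (by norm_num) (Real.sqrt_ne_zero'.2 Real.pi_pos), log_sqrt_pi]
    have h4 : Real.log 4 = 2 * Real.log 2 := by
      rw [show (4:ℝ) = 2 ^ (2:ℕ) by norm_num, Real.log_pow]; push_cast; ring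
    rw [h4]
  rw [hd] at hconv
  have hlogu2 : Real.log (u / 2) = Real.log u - Real.log 2 :=
    Real.log_div hup.ne' (by norm_num)
  have hl32 : Real.log (3/2 : ℝ) = Real.log 3 - Real.log 2 :=
    Real.log_div (by norm_num) (by norm_num)
  have htan : u * Real.log (3/2) + u - 3/2 ≤ u * Real.log u :=
    tangent_log (by norm_num) hup
  rw [hl32] at htan
  have hK := num2
  have hC := num3
  simp only [L]
  rw [hu.symm, hlogu2, log_sqrt_pi]
  have hx' : 2 * x - 4 = 2 * u - 3 := by rw [hu]; ring
  rw [hx'] at hconv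
  nlinarith [hconv, mul_nonneg (by linarith : (0:ℝ) ≤ u - 3/2)
    (by linarith : (0:ℝ) ≤ 1 + 2 * Real.log 2 - Real.log 3 - Real.log π)]

/-- induction step: the bound propagates from `x` to `x + 1`. -/
private lemma step {x : ℝ} (hx : 3/2 ≤ x) (h : Real.log (Real.Gamma x) ≤ L x) :
    Real.log (Real.Gamma (x + 1)) ≤ L (x + 1) := by
  obtain ⟨u, hu⟩ : ∃ u : ℝ, u = x - 1/2 := ⟨_, rfl⟩
  have hu1 : 1 ≤ u := by rw [hu]; linarith
  have hup : 0 < u := by linarith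
  have hG : Real.Gamma (x + 1) = x * Real.Gamma x := Real.Gamma_add_one (by linarith)
  have hGpos : 0 < Real.Gamma x := Real.Gamma_pos_of_pos (by linarith)
  rw [hG, Real.log_mul (by linarith) hGpos.ne']
  have h1 : u / (u + 1) ≤ u * Real.log ((u+1)/u) := by
    have hl := Real.one_sub_inv_le_log_of_pos (show (0:ℝ) < (u+1)/u by positivity)
    have hinv : ((u+1)/u)⁻¹ = u / (u+1) := by
      rw [inv_div]
    have h2 := mul_le_mul_of_nonneg_left (hinv ▸ hl) hup.le
    have h3 : u * (1 - u/(u+1)) = u / (u+1) := by field_simp; ring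
    linarith [h3 ▸ h2]
  have h2 : Real.log ((2*u+1)/(u+1)) ≤ u / (u + 1) := by
    have hl := Real.log_le_sub_one_of_pos (show (0:ℝ) < (2*u+1)/(u+1) by positivity)
    have heq : (2*u+1)/(u+1) - 1 = u / (u+1) := by field_simp; ring
    linarith [heq ▸ hl]
  have hlr : Real.log ((u+1)/u) = Real.log (u+1) - Real.log u :=
    Real.log_div (by positivity) hup.ne'
  have hlr2 : Real.log ((2*u+1)/(u+1)) = Real.log (2*u+1) - Real.log (u+1) :=
    Real.log_div (by positivity) (by positivity)
  rw [hlr] at h1; rw [hlr2] at h2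
  have e1 : Real.log (u/2) = Real.log u - Real.log 2 := Real.log_div hup.ne' (by norm_num)
  have e2 : Real.log ((u+1)/2) = Real.log (u+1) - Real.log 2 :=
    Real.log_div (by positivity) (by norm_num)
  have e3 : Real.log (2*u+1) = Real.log 2 + Real.log (u + 1/2) := by
    rw [show 2*u+1 = 2*(u+1/2) by ring, Real.log_mul (by norm_num) (by positivity)]
  have hkey : Real.log (u + 1/2) + u * Real.log (u/2) ≤ (u+1) * Real.log ((u+1)/2) := by
    rw [e1, e2]
    nlinarith [e3 ▸ h2]
  have hx2 : x = u + 1/2 := by rw [hu]; ring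
  have hlx : Real.log x = Real.log (u + 1/2) := by rw [hx2]
  simp only [L] at h ⊢
  rw [show x + 1 - 1/2 = u + 1 by rw [hx2]; ring]
  rw [show x - 1/2 = u from hu.symm] at h
  linarith [hkey, h, hlx.le, hlx.ge]

/-- the bound for all `x ≥ 3/2`, log form. -/
private lemma main (x : ℝ) (hx : 3/2 ≤ x) : Real.log (Real.Gamma x) ≤ L x := by
  obtain ⟨n, hn⟩ := exists_nat_ge (x - 5/2)
  induction n generalizing x with
  | zero =>
    simp only [Nat.cast_zero] at hn
    rcases le_or_gt x 2 with h | h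
    · exact baseA hx h
    · exact baseB h.le (by linarith)
  | succ n ih =>
    rcases le_or_gt (x - 5/2) n with h | h
    · exact ih x hx h
    · have hx1 : 3/2 ≤ x - 1 := by
        have : (0:ℝ) ≤ n := Nat.cast_nonneg n
        linarith
      have h' := ih (x - 1) hx1 (by push_cast at hn ⊢; linarith)
      have := step hx1 h'
      simpa using this

theorem stmt1 (q : ℝ) (hq : 2 ≤ q) :
    Real.Gamma ((q + 1) / 2) ≤ (q / 4) ^ (q / 2) * Real.sqrt Real.pi := by
  have hx : 3/2 ≤ (q + 1) / 2 := by linarith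
  have h := main ((q + 1) / 2) hx
  have hGpos : 0 < Real.Gamma ((q + 1) / 2) := Real.Gamma_pos_of_pos (by linarith)
  have hq4 : (0:ℝ) < q / 4 := by linarith
  have hsq : (0:ℝ) < Real.sqrt π := Real.sqrt_pos.2 Real.pi_pos
  simp only [L] at h
  rw [show (q + 1) / 2 - 1/2 = q/2 by ring] at h
  rw [show (q:ℝ)/2/2 = q/4 by ring] at h
  calc Real.Gamma ((q + 1) / 2)
      = Real.exp (Real.log (Real.Gamma ((q + 1) / 2))) := (Real.exp_log hGpos).symm
    _ ≤ Real.exp (q / 2 * Real.log (q / 4) + Real.log (Real.sqrt π)) := Real.exp_le_exp.2 h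
    _ = (q / 4) ^ (q / 2) * Real.sqrt π := by
        rw [Real.exp_add, Real.exp_log hsq, Real.rpow_def_of_pos hq4, mul_comm (Real.log (q/4))]
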